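/- arXiv:1204.6434 — 5 statements merged into one kernel-verified Lean document; each statement's English description precedes it below -/
import Mathlib

section
/- Let n ≥ 1 be an integer, α ∈ (0,1), and a, K, M > 0. Then there exists a constant C > 0, depending only on n, α, a, K, M, with the following property: for every differentiable f : ℝ → ℝ with f(0) = 0 and |f(r)| ≤ K, |f′(r)| ≤ K for all |r| ≤ a; every differentiable h : ℝⁿ → (0,∞) with |∇h(x)| ≤ M·h(x) for all x; and every continuous w : ℝⁿ → ℝ with sup_x |w(x)| ≤ a, one has ‖(f∘w)·w·h‖_{C^α(ℝⁿ)} ≤ C · (sup_x |w(x)|) · ‖w·h‖_{C^α(ℝⁿ)} (the inequality being trivially true if the right-hand side is infinite). -/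
open scoped ENNReal

noncomputable section

/-- The (possibly infinite) Hölder norm `max{sup |g|, sup_{x≠x'} |g x - g x'|/|x-x'|^α}`
of a function `g : ℝⁿ → ℝ`, valued in `ℝ≥0∞`. -/
def holderNormE (n : ℕ) (α : ℝ) (g : EuclideanSpace ℝ (Fin n) → ℝ) : ℝ≥0∞ :=
  max (⨆ x : EuclideanSpace ℝ (Fin n), ENNReal.ofReal |g x|)
    (⨆ (x : EuclideanSpace ℝ (Fin n)) (x' : EuclideanSpace ℝ (Fin n)) (_ : x ≠ x'),
      ENNReal.ofReal (|g x - g x'| / ‖x - x'‖ ^ α))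

theorem exp_sub_one_le_mul_exp (t : ℝ) : Real.exp t - 1 ≤ t * Real.exp t := by
  have h1 : 1 - t ≤ Real.exp (-t) := by linarith [Real.add_one_le_exp (-t)]
  have h2 : (1 - t) * Real.exp t ≤ Real.exp (-t) * Real.exp t :=
    mul_le_mul_of_nonneg_right h1 (Real.exp_pos t).le
  rw [← Real.exp_add, neg_add_cancel, Real.exp_zero] at h2
  nlinarith

/-- **Weighted product estimate** (Lemma weighted-algebra):
`‖(f∘w)·w·h‖_{C^α} ≤ C · sup|w| · ‖w·h‖_{C^α}`, with `C` depending only on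
`n, α, a, K, M` (trivially true when the right-hand side is infinite). -/
theorem statement7
    (n : ℕ) (hn : 1 ≤ n) (α : ℝ) (hα : α ∈ Set.Ioo (0 : ℝ) 1)
    (a K M : ℝ) (ha : 0 < a) (hK : 0 < K) (hM : 0 < M) :
    ∃ C : ℝ, 0 < C ∧
      ∀ f : ℝ → ℝ, Differentiable ℝ f → f 0 = 0 →
        (∀ r : ℝ, |r| ≤ a → |f r| ≤ K ∧ |deriv f r| ≤ K) →
      ∀ h : EuclideanSpace ℝ (Fin n) → ℝ, Differentiable ℝ h → (∀ x, 0 < h x) →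
        (∀ x, ‖fderiv ℝ h x‖ ≤ M * h x) →
      ∀ w : EuclideanSpace ℝ (Fin n) → ℝ, Continuous w → (∀ x, |w x| ≤ a) →
        holderNormE n α (fun x => f (w x) * w x * h x) ≤
          ENNReal.ofReal C * (⨆ x : EuclideanSpace ℝ (Fin n), ENNReal.ofReal |w x|) *
            holderNormE n α (fun x => w x * h x) := by
  obtain ⟨hα0, hα1⟩ := hα
  refine ⟨K * (2 + M * Real.exp M) + 1, by positivity, ?_⟩
  intro f hf hf0 hfb h hh hhpos hhgrad w hw hwa
  set C : ℝ := K * (2 + M * Real.exp M) + 1 with hCdef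
  have hK0 : (0:ℝ) ≤ K := hK.le
  have hC0 : (0:ℝ) ≤ C := by positivity
  have hle1 : K ≤ C := by
    rw [hCdef]; nlinarith [mul_pos hK (mul_pos hM (Real.exp_pos M))]
  have hle2 : K + K ≤ C := by
    rw [hCdef]; nlinarith [mul_pos hK (mul_pos hM (Real.exp_pos M))]
  have hle3 : K + K + K * (M * Real.exp M) ≤ C := by
    rw [hCdef]; nlinarith [mul_pos hK (mul_pos hM (Real.exp_pos M))]
  set g : EuclideanSpace ℝ (Fin n) → ℝ := fun x => w x * h x with hgdef
  set S : ℝ≥0∞ := ⨆ x : EuclideanSpace ℝ (Fin n), ENNReal.ofReal |w x| with hSdef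
  set N : ℝ≥0∞ := holderNormE n α g with hNdef
  -- basic facts in ℝ≥0∞
  have hSle : ∀ y, ENNReal.ofReal |w y| ≤ S := fun y => le_iSup (fun x => ENNReal.ofReal |w x|) y
  have hN1 : ∀ y, ENNReal.ofReal |g y| ≤ N := by
    intro y
    rw [hNdef, holderNormE]
    exact le_trans (le_iSup (fun x => ENNReal.ofReal |g x|) y) (le_max_left _ _)
  have hN2 : ∀ y y', y ≠ y' → ENNReal.ofReal (|g y - g y'| / ‖y - y'‖ ^ α) ≤ N := by
    intro y y' hne
    rw [hNdef, holderNormE]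
    refine le_trans ?_ (le_max_right _ _)
    exact le_iSup_of_le y (le_iSup_of_le y' (le_iSup_of_le hne le_rfl))
  clear_value S N
  clear hSdef hNdef
  -- f is K-Lipschitz on [-a, a]
  have hflip : ∀ r r' : ℝ, |r| ≤ a → |r'| ≤ a → |f r - f r'| ≤ K * |r - r'| := by
    intro r r' hr hr'
    have key := Convex.norm_image_sub_le_of_norm_deriv_le (s := Set.Icc (-a) a)
      (fun x _ => hf x)
      (fun x hx => by
        have hx' : |x| ≤ a := abs_le.mpr ⟨(Set.mem_Icc.mp hx).1, (Set.mem_Icc.mp hx).2⟩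
        simpa [Real.norm_eq_abs] using (hfb x hx').2)
      (convex_Icc _ _)
      (Set.mem_Icc.mpr ⟨(abs_le.mp hr').1, (abs_le.mp hr').2⟩)
      (Set.mem_Icc.mpr ⟨(abs_le.mp hr).1, (abs_le.mp hr).2⟩)
    simpa [Real.norm_eq_abs] using key
  have hfK : ∀ r : ℝ, |r| ≤ a → |f r| ≤ K * |r| := by
    intro r hr
    have := hflip r 0 hr (by simpa using ha.le)
    simpa [hf0] using this
  -- log h is M-Lipschitz
  have hfd : ∀ x, HasFDerivAt (fun z => Real.log (h z)) ((h x)⁻¹ • fderiv ℝ h x) x := fun x =>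
    (Real.hasDerivAt_log (hhpos x).ne').comp_hasFDerivAt x (hh x).hasFDerivAt
  have hloglip : ∀ x y : EuclideanSpace ℝ (Fin n),
      |Real.log (h x) - Real.log (h y)| ≤ M * ‖x - y‖ := by
    intro x y
    have key := Convex.norm_image_sub_le_of_norm_fderiv_le (s := Set.univ)
      (f := fun z => Real.log (h z))
      (fun z _ => (hfd z).differentiableAt)
      (fun z _ => by
        rw [(hfd z).fderiv, norm_smul, Real.norm_eq_abs, abs_of_pos (inv_pos.2 (hhpos z))]
        calc (h z)⁻¹ * ‖fderiv ℝ h z‖ ≤ (h z)⁻¹ * (M * h z) := by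
              exact mul_le_mul_of_nonneg_left (hhgrad z) (inv_pos.2 (hhpos z)).le
          _ = M := by rw [mul_comm M (h z), inv_mul_cancel_left₀ (hhpos z).ne'])
      convex_univ (Set.mem_univ y) (Set.mem_univ x)
    simpa [Real.norm_eq_abs] using key
  -- ratio bound
  have hratio : ∀ x y : EuclideanSpace ℝ (Fin n),
      h x / h y ≤ Real.exp (M * ‖x - y‖) := by
    intro x y
    have h1 : Real.log (h x) - Real.log (h y) ≤ M * ‖x - y‖ :=
      (le_abs_self _).trans (hloglip x y)
    have h2 : h x / h y = Real.exp (Real.log (h x) - Real.log (h y)) := by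
      rw [Real.exp_sub, Real.exp_log (hhpos x), Real.exp_log (hhpos y)]
    rw [h2]
    exact Real.exp_le_exp.mpr h1
  have hratio2 : ∀ x y : EuclideanSpace ℝ (Fin n),
      |h x / h y - 1| ≤ Real.exp (M * ‖x - y‖) - 1 := by
    intro x y
    set E := Real.exp (M * ‖x - y‖) with hE
    have hE1 : 1 ≤ E := Real.one_le_exp (by positivity)
    have hpx := hhpos x
    have hpy := hhpos y
    have h1 : h x / h y ≤ E := hratio x y
    have h2 : h y / h x ≤ E := by
      have := hratio y x
      rwa [show ‖y - x‖ = ‖x - y‖ from norm_sub_rev y x] at this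
    have hyx : h y ≤ E * h x := by
      rw [div_le_iff₀ hpx] at h2; linarith
    have hgoal : (2 - E) * h y ≤ h x := by
      nlinarith [mul_nonneg (sq_nonneg (E - 1)) hpy.le, mul_pos hpx hpy]
    have h3 : 2 - E ≤ h x / h y := (le_div_iff₀ hpy).mpr hgoal
    rw [abs_le]
    constructor <;> linarith
  -- the master pointwise inequality
  have hmain : ∀ x x' : EuclideanSpace ℝ (Fin n),
      |f (w x) * g x - f (w x') * g x'| ≤
        K * |w x| * |g x - g x'| + K * |w x'| * |g x - g x'| +
          K * |w x'| * |g x| * (Real.exp (M * ‖x - x'‖) - 1) := by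
    intro x x'
    have t1 : |f (w x)| ≤ K * |w x| := hfK _ (hwa x)
    have t2 : |f (w x) - f (w x')| ≤ K * |w x - w x'| := hflip _ _ (hwa x) (hwa x')
    have e1 : f (w x) * g x - f (w x') * g x' =
        f (w x) * (g x - g x') + g x' * (f (w x) - f (w x')) := by ring
    have e2 : g x' * (w x - w x') = w x' * ((g x - g x') + g x * (h x' / h x - 1)) := by
      show (w x' * h x') * (w x - w x') =
        w x' * (((w x * h x) - (w x' * h x')) + (w x * h x) * (h x' / h x - 1))
      have hx0 : h x ≠ 0 := (hhpos x).ne'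
      field_simp
      ring
    have t3 : |h x' / h x - 1| ≤ Real.exp (M * ‖x - x'‖) - 1 := by
      have := hratio2 x' x
      rwa [show ‖x' - x‖ = ‖x - x'‖ from norm_sub_rev x' x] at this
    have key2 : |g x'| * |w x - w x'| ≤
        |w x'| * (|g x - g x'| + |g x| * (Real.exp (M * ‖x - x'‖) - 1)) := by
      rw [← abs_mul, e2, abs_mul]
      refine mul_le_mul_of_nonneg_left ?_ (abs_nonneg _)
      refine (abs_add_le _ _).trans ?_
      gcongr
      rw [abs_mul]
      exact mul_le_mul_of_nonneg_left t3 (abs_nonneg _)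
    calc |f (w x) * g x - f (w x') * g x'|
        = |f (w x) * (g x - g x') + g x' * (f (w x) - f (w x'))| := by rw [e1]
      _ ≤ |f (w x) * (g x - g x')| + |g x' * (f (w x) - f (w x'))| := abs_add_le _ _
      _ = |f (w x)| * |g x - g x'| + |g x'| * |f (w x) - f (w x')| := by
          rw [abs_mul, abs_mul]
      _ ≤ (K * |w x|) * |g x - g x'| + |g x'| * (K * |w x - w x'|) :=
          add_le_add (mul_le_mul_of_nonneg_right t1 (abs_nonneg _))
            (mul_le_mul_of_nonneg_left t2 (abs_nonneg _))
      _ = K * |w x| * |g x - g x'| + K * (|g x'| * |w x - w x'|) := by ring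
      _ ≤ K * |w x| * |g x - g x'| +
            K * (|w x'| * (|g x - g x'| + |g x| * (Real.exp (M * ‖x - x'‖) - 1))) := by
          gcongr
      _ = K * |w x| * |g x - g x'| + K * |w x'| * |g x - g x'| +
            K * |w x'| * |g x| * (Real.exp (M * ‖x - x'‖) - 1) := by ring
  have hFg : ∀ y : EuclideanSpace ℝ (Fin n), f (w y) * w y * h y = f (w y) * g y :=
    fun y => mul_assoc _ _ _
  clear hgdef
  clear_value g
  -- generic product bound in ℝ≥0∞
  have hprod : ∀ (c : ℝ) (y : EuclideanSpace ℝ (Fin n)) (t : ℝ≥0∞), 0 ≤ c → t ≤ N →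
      ENNReal.ofReal c * ENNReal.ofReal |w y| * t ≤ ENNReal.ofReal c * (S * N) := by
    intro c y t hc ht
    rw [mul_assoc]
    exact mul_le_mul' le_rfl (mul_le_mul' (hSle y) ht)
  have hCge : ∀ c : ℝ, c ≤ C → ENNReal.ofReal c * (S * N) ≤ ENNReal.ofReal C * S * N := by
    intro c hc
    rw [mul_assoc]
    exact mul_le_mul' (ENNReal.ofReal_le_ofReal hc) le_rfl
  rw [holderNormE]
  refine max_le ?_ ?_
  · -- sup part
    refine iSup_le fun x => ?_
    have hFx : |f (w x) * w x * h x| ≤ K * |w x| * |g x| := by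
      rw [hFg x, abs_mul]
      exact mul_le_mul_of_nonneg_right (hfK _ (hwa x)) (abs_nonneg _)
    calc ENNReal.ofReal |f (w x) * w x * h x|
        ≤ ENNReal.ofReal (K * |w x| * |g x|) := ENNReal.ofReal_le_ofReal hFx
      _ = ENNReal.ofReal K * ENNReal.ofReal |w x| * ENNReal.ofReal |g x| := by
          rw [ENNReal.ofReal_mul (by positivity), ENNReal.ofReal_mul hK0]
      _ ≤ ENNReal.ofReal K * (S * N) := hprod K x _ hK0 (hN1 x)
      _ ≤ ENNReal.ofReal C * S * N := hCge K hle1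
  · -- Hölder part
    refine iSup_le fun x => iSup_le fun x' => iSup_le fun hne => ?_
    have hd : (0:ℝ) < ‖x - x'‖ := by
      rw [norm_pos_iff]; exact sub_ne_zero.mpr hne
    have hdα : (0:ℝ) < ‖x - x'‖ ^ α := Real.rpow_pos_of_pos hd α
    by_cases hd1 : ‖x - x'‖ ≤ 1
    · -- short distances
      have hddα : ‖x - x'‖ ≤ ‖x - x'‖ ^ α := by
        calc ‖x - x'‖ = ‖x - x'‖ ^ (1:ℝ) := (Real.rpow_one _).symm
          _ ≤ ‖x - x'‖ ^ α := Real.rpow_le_rpow_of_exponent_ge hd hd1 hα1.le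
      have hE : Real.exp (M * ‖x - x'‖) - 1 ≤ M * Real.exp M * ‖x - x'‖ ^ α := by
        have h1 := exp_sub_one_le_mul_exp (M * ‖x - x'‖)
        have h2 : Real.exp (M * ‖x - x'‖) ≤ Real.exp M := by
          apply Real.exp_le_exp.mpr; nlinarith
        calc Real.exp (M * ‖x - x'‖) - 1 ≤ M * ‖x - x'‖ * Real.exp (M * ‖x - x'‖) := h1
          _ ≤ M * ‖x - x'‖ * Real.exp M := by
              exact mul_le_mul_of_nonneg_left h2 (by positivity)
          _ = M * Real.exp M * ‖x - x'‖ := by ring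
          _ ≤ M * Real.exp M * ‖x - x'‖ ^ α := by
              exact mul_le_mul_of_nonneg_left hddα (by positivity)
      have h3 : K * |w x'| * |g x| * (Real.exp (M * ‖x - x'‖) - 1) ≤
          K * |w x'| * |g x| * (M * Real.exp M * ‖x - x'‖ ^ α) :=
        mul_le_mul_of_nonneg_left hE (by positivity)
      have h5 : |f (w x) * g x - f (w x') * g x'| ≤
          K * |w x| * |g x - g x'| + K * |w x'| * |g x - g x'| +
            K * |w x'| * |g x| * (M * Real.exp M * ‖x - x'‖ ^ α) :=
        (hmain x x').trans (by linarith)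
      have hstep : |f (w x) * w x * h x - f (w x') * w x' * h x'| / ‖x - x'‖ ^ α ≤
          K * |w x| * (|g x - g x'| / ‖x - x'‖ ^ α) +
            K * |w x'| * (|g x - g x'| / ‖x - x'‖ ^ α) +
            (K * (M * Real.exp M)) * (|w x'| * |g x|) := by
        rw [hFg x, hFg x']
        calc |f (w x) * g x - f (w x') * g x'| / ‖x - x'‖ ^ α
            ≤ (K * |w x| * |g x - g x'| + K * |w x'| * |g x - g x'| +
                K * |w x'| * |g x| * (M * Real.exp M * ‖x - x'‖ ^ α)) / ‖x - x'‖ ^ α :=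
              div_le_div_of_nonneg_right h5 hdα.le
          _ = K * |w x| * (|g x - g x'| / ‖x - x'‖ ^ α) +
                K * |w x'| * (|g x - g x'| / ‖x - x'‖ ^ α) +
                (K * (M * Real.exp M)) * (|w x'| * |g x|) := by
              field_simp
      have TA : ENNReal.ofReal (K * |w x| * (|g x - g x'| / ‖x - x'‖ ^ α)) ≤
          ENNReal.ofReal K * (S * N) := by
        rw [ENNReal.ofReal_mul (by positivity), ENNReal.ofReal_mul hK0]
        exact hprod K x _ hK0 (hN2 x x' hne)
      have TB : ENNReal.ofReal (K * |w x'| * (|g x - g x'| / ‖x - x'‖ ^ α)) ≤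
          ENNReal.ofReal K * (S * N) := by
        rw [ENNReal.ofReal_mul (by positivity), ENNReal.ofReal_mul hK0]
        exact hprod K x' _ hK0 (hN2 x x' hne)
      have TC : ENNReal.ofReal ((K * (M * Real.exp M)) * (|w x'| * |g x|)) ≤
          ENNReal.ofReal (K * (M * Real.exp M)) * (S * N) := by
        rw [ENNReal.ofReal_mul (show (0:ℝ) ≤ K * (M * Real.exp M) by positivity),
          ENNReal.ofReal_mul (abs_nonneg (w x')), ← mul_assoc]
        exact hprod _ x' _ (by positivity) (hN1 x)
      calc ENNReal.ofReal (|f (w x) * w x * h x - f (w x') * w x' * h x'| / ‖x - x'‖ ^ α)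
          ≤ ENNReal.ofReal (K * |w x| * (|g x - g x'| / ‖x - x'‖ ^ α) +
              K * |w x'| * (|g x - g x'| / ‖x - x'‖ ^ α) +
              (K * (M * Real.exp M)) * (|w x'| * |g x|)) := ENNReal.ofReal_le_ofReal hstep
        _ = ENNReal.ofReal (K * |w x| * (|g x - g x'| / ‖x - x'‖ ^ α)) +
              ENNReal.ofReal (K * |w x'| * (|g x - g x'| / ‖x - x'‖ ^ α)) +
              ENNReal.ofReal ((K * (M * Real.exp M)) * (|w x'| * |g x|)) := by
            rw [ENNReal.ofReal_add (by positivity) (by positivity),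
              ENNReal.ofReal_add (by positivity) (by positivity)]
        _ ≤ ENNReal.ofReal K * (S * N) + ENNReal.ofReal K * (S * N) +
              ENNReal.ofReal (K * (M * Real.exp M)) * (S * N) :=
            add_le_add (add_le_add TA TB) TC
        _ = (ENNReal.ofReal K + ENNReal.ofReal K + ENNReal.ofReal (K * (M * Real.exp M))) *
              (S * N) := by rw [add_mul, add_mul]
        _ = ENNReal.ofReal (K + K + K * (M * Real.exp M)) * (S * N) := by
            rw [ENNReal.ofReal_add (by positivity) (by positivity),
              ENNReal.ofReal_add hK0 hK0]
        _ ≤ ENNReal.ofReal C * S * N := hCge _ hle3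
    · -- long distances
      push_neg at hd1
      have h1dα : (1:ℝ) ≤ ‖x - x'‖ ^ α := by
        calc (1:ℝ) = 1 ^ α := (Real.one_rpow α).symm
          _ ≤ ‖x - x'‖ ^ α := Real.rpow_le_rpow zero_le_one hd1.le hα0.le
      have hstep : |f (w x) * w x * h x - f (w x') * w x' * h x'| / ‖x - x'‖ ^ α ≤
          K * |w x| * |g x| + K * |w x'| * |g x'| := by
        rw [hFg x, hFg x']
        calc |f (w x) * g x - f (w x') * g x'| / ‖x - x'‖ ^ α
            ≤ |f (w x) * g x - f (w x') * g x'| := div_le_self (abs_nonneg _) h1dα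
          _ ≤ |f (w x) * g x| + |f (w x') * g x'| := abs_sub _ _
          _ = |f (w x)| * |g x| + |f (w x')| * |g x'| := by rw [abs_mul, abs_mul]
          _ ≤ (K * |w x|) * |g x| + (K * |w x'|) * |g x'| :=
              add_le_add (mul_le_mul_of_nonneg_right (hfK _ (hwa x)) (abs_nonneg _))
                (mul_le_mul_of_nonneg_right (hfK _ (hwa x')) (abs_nonneg _))
      have TA : ENNReal.ofReal (K * |w x| * |g x|) ≤ ENNReal.ofReal K * (S * N) := by
        rw [ENNReal.ofReal_mul (by positivity), ENNReal.ofReal_mul hK0]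
        exact hprod K x _ hK0 (hN1 x)
      have TB : ENNReal.ofReal (K * |w x'| * |g x'|) ≤ ENNReal.ofReal K * (S * N) := by
        rw [ENNReal.ofReal_mul (by positivity), ENNReal.ofReal_mul hK0]
        exact hprod K x' _ hK0 (hN1 x')
      calc ENNReal.ofReal (|f (w x) * w x * h x - f (w x') * w x' * h x'| / ‖x - x'‖ ^ α)
          ≤ ENNReal.ofReal (K * |w x| * |g x| + K * |w x'| * |g x'|) :=
            ENNReal.ofReal_le_ofReal hstep
        _ = ENNReal.ofReal (K * |w x| * |g x|) + ENNReal.ofReal (K * |w x'| * |g x'|) := by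
            rw [ENNReal.ofReal_add (by positivity) (by positivity)]
        _ ≤ ENNReal.ofReal K * (S * N) + ENNReal.ofReal K * (S * N) := add_le_add TA TB
        _ = (ENNReal.ofReal K + ENNReal.ofReal K) * (S * N) := by rw [add_mul]
        _ = ENNReal.ofReal (K + K) * (S * N) := by rw [ENNReal.ofReal_add hK0 hK0]
        _ ≤ ENNReal.ofReal C * S * N := hCge _ hle2
end
end

section
/- Let n ≥ 1 and 0 < t₀ < t₁. Then ∫_{ℝⁿ} |Γ(t₁,y) − Γ(t₀,y)| dy = (2/Γ(n/2)) · ( G(a·t₁) − G(a·t₀) ), where a := (n/2)·(ln t₁ − ln t₀)/(t₁ − t₀), G(u) := ∫₀^u e^{−s} s^{n/2 − 1} ds is the lower incomplete gamma function with parameter n/2, and Γ(n/2) is the Gamma function. -/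
open MeasureTheory
open Metric Set
open scoped BigOperators ENNReal Topology

noncomputable section

/-- The heat kernel `Γ(t,x) = (4πt)^{-n/2} exp(-|x|²/(4t))` on `ℝⁿ`. -/
def heatKernel (n : ℕ) (t : ℝ) (x : EuclideanSpace ℝ (Fin n)) : ℝ :=
  (4 * Real.pi * t) ^ (-(n : ℝ) / 2) * Real.exp (-‖x‖ ^ 2 / (4 * t))

lemma hk_eq (n : ℕ) {t : ℝ} (ht : 0 < t) :
    heatKernel n t = fun y => (4 * Real.pi * t) ^ (-(n : ℝ) / 2) *
      Real.exp (-(4 * t)⁻¹ * ‖y‖ ^ 2) := by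
  funext y
  rw [heatKernel]
  congr 1
  ring_nf

lemma hk_integrable (n : ℕ) {t : ℝ} (ht : 0 < t) :
    Integrable (heatKernel n t) := by
  rw [hk_eq n ht]
  apply Integrable.const_mul
  have h := (GaussianFourier.integrable_cexp_neg_mul_sq_norm_add
      (b := ((4 * t)⁻¹ : ℝ)) (by simpa using by positivity) 0
      (0 : EuclideanSpace ℝ (Fin n))).norm
  refine h.congr (Filter.Eventually.of_forall fun v => ?_)
  simp only []
  rw [Complex.norm_exp]
  norm_num
  left
  norm_cast

lemma hk_mass (n : ℕ) {t : ℝ} (ht : 0 < t) :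
    ∫ y : EuclideanSpace ℝ (Fin n), heatKernel n t y = 1 := by
  have h4t : (0:ℝ) < 4 * t := by linarith
  rw [hk_eq n ht]
  rw [integral_const_mul]
  rw [GaussianFourier.integral_rexp_neg_mul_sq_norm (by positivity)]
  rw [finrank_euclideanSpace_fin]
  have : Real.pi / (4 * t)⁻¹ = 4 * Real.pi * t := by field_simp
  rw [this, ← Real.rpow_add (by positivity)]
  norm_num
  rw [neg_div, neg_add_cancel, Real.rpow_zero]


lemma hk_ball (n : ℕ) (hn : 1 ≤ n) {t R : ℝ} (ht : 0 < t) (hR : 0 ≤ R) :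
    ∫ y in closedBall (0 : EuclideanSpace ℝ (Fin n)) R, heatKernel n t y
      = (1 / Real.Gamma ((n : ℝ) / 2)) *
          ∫ s in Set.Ioc (0 : ℝ) (R ^ 2 / (4 * t)), Real.exp (-s) * s ^ ((n : ℝ) / 2 - 1) := by
  haveI : Nontrivial (EuclideanSpace ℝ (Fin n)) :=
    Module.nontrivial_of_finrank_pos (R := ℝ) (by rw [finrank_euclideanSpace_fin]; omega)
  haveI : Nonempty (Fin n) := ⟨⟨0, hn⟩⟩
  have h4t : (0 : ℝ) < 4 * t := by linarith
  set c : ℝ := (4 * Real.pi * t) ^ (-(n : ℝ) / 2) with hc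
  set ν : ℝ := (n : ℝ) / 2 - 1 with hν
  set F : ℝ → ℝ := Set.indicator (Set.Iic R) (fun r => c * Real.exp (-r ^ 2 / (4 * t))) with hF
  set g : ℝ → ℝ :=
    Set.indicator (Set.Ioc 0 (R ^ 2)) (fun s => c * (Real.exp (-s / (4 * t)) * s ^ ν)) with hg
  -- step 1 : reduce to a radial integral
  have h1 : ∫ y in closedBall (0 : EuclideanSpace ℝ (Fin n)) R, heatKernel n t y
      = ∫ y : EuclideanSpace ℝ (Fin n), F ‖y‖ := by
    rw [← integral_indicator measurableSet_closedBall]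
    congr 1
    funext y
    simp only [hF, Set.indicator, mem_closedBall_zero_iff, Set.mem_Iic, heatKernel, hc]
  -- step 2 : polar coordinates
  have h2 : ∫ y : EuclideanSpace ℝ (Fin n), F ‖y‖
      = (n : ℝ) * (volume (ball (0 : EuclideanSpace ℝ (Fin n)) 1)).toReal *
          ∫ r in Set.Ioi (0 : ℝ), r ^ (n - 1) * F r := by
    have := MeasureTheory.integral_fun_norm_addHaar
      (volume : Measure (EuclideanSpace ℝ (Fin n))) F
    simp only [finrank_euclideanSpace_fin, nsmul_eq_mul, smul_eq_mul] at this
    rw [this, ← mul_assoc, measureReal_def]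
  -- step 3 : substitution s = r²
  have h3 : ∫ s in Set.Ioi (0 : ℝ), g s
      = 2 * ∫ r in Set.Ioi (0 : ℝ), r ^ (n - 1) * F r := by
    rw [← integral_comp_rpow_Ioi_of_pos (g := g) (p := 2) zero_lt_two, ← integral_const_mul]
    refine setIntegral_congr_fun measurableSet_Ioi fun x hx => ?_
    have hx0 : (0 : ℝ) < x := hx
    have hx2 : x ^ ((2 : ℝ) - 1) = x := by
      norm_num
    have hxs : x ^ (2 : ℝ) = x ^ 2 := by
      rw [← Real.rpow_natCast x 2]; norm_num
    rw [smul_eq_mul, hx2, hxs]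
    by_cases hxR : x ≤ R
    · have hmem : x ^ 2 ∈ Set.Ioc 0 (R ^ 2) := ⟨by positivity, by nlinarith⟩
      have hmem' : x ∈ Set.Iic R := hxR
      rw [hg, hF, Set.indicator_of_mem hmem, Set.indicator_of_mem hmem']
      have hsq : (x ^ 2 : ℝ) ^ ν = x ^ ((n : ℝ) - 2) := by
        rw [← Real.rpow_natCast x 2, ← Real.rpow_mul hx0.le, hν]
        congr 1
        ring
      have hpow : (x : ℝ) ^ (n - 1) = x ^ ((n : ℝ) - 1) := by
        rw [← Real.rpow_natCast x (n - 1), Nat.cast_sub hn, Nat.cast_one]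
      have hxx : x * x ^ ((n : ℝ) - 2) = x ^ ((n : ℝ) - 1) := by
        rw [show ((n : ℝ) - 1) = 1 + ((n : ℝ) - 2) by ring, Real.rpow_add hx0,
          Real.rpow_one]
      rw [hsq, hpow]
      rw [← hxx]
      ring
    · have hmem : x ^ 2 ∉ Set.Ioc 0 (R ^ 2) := by
        intro h
        exact hxR (by nlinarith [h.2])
      have hmem' : x ∉ Set.Iic R := hxR
      rw [hg, hF, Set.indicator_of_notMem hmem, Set.indicator_of_notMem hmem']
      ring
  -- step 4 : substitution s = 4 t u
  have h4 : ∫ s in Set.Ioi (0 : ℝ), g s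
      = (4 * t) * ((4 * t) ^ ν * (c * ∫ s in Set.Ioc (0 : ℝ) (R ^ 2 / (4 * t)),
          Real.exp (-s) * s ^ ν)) := by
    have hcomp := integral_comp_mul_left_Ioi g 0 h4t
    rw [mul_zero] at hcomp
    have heq : ∫ x in Set.Ioi (0 : ℝ), g (4 * t * x)
        = ∫ x in Set.Ioi (0 : ℝ),
            Set.indicator (Set.Ioc 0 (R ^ 2 / (4 * t)))
              (fun x => c * ((4 * t) ^ ν * (Real.exp (-x) * x ^ ν))) x := by
      refine setIntegral_congr_fun measurableSet_Ioi fun x hx => ?_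
      have hx0 : (0 : ℝ) < x := hx
      by_cases hmem : x ≤ R ^ 2 / (4 * t)
      · have h1 : 4 * t * x ∈ Set.Ioc 0 (R ^ 2) :=
          Set.mem_Ioc.mpr ⟨by positivity, by have h := (le_div_iff₀ h4t).mp hmem; linarith⟩
        rw [hg, Set.indicator_of_mem h1, Set.indicator_of_mem (Set.mem_Ioc.mpr ⟨hx0, hmem⟩)]
        have hdiv : -(4 * t * x) / (4 * t) = -x := by field_simp
        have hmul : (4 * t * x) ^ ν = (4 * t) ^ ν * x ^ ν :=
          Real.mul_rpow h4t.le hx0.le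
        rw [hdiv, hmul]
        ring
      · have h1 : 4 * t * x ∉ Set.Ioc 0 (R ^ 2) := by
          intro h
          exact hmem (by rw [le_div_iff₀ h4t]; nlinarith [h.2])
        rw [hg, Set.indicator_of_notMem h1,
          Set.indicator_of_notMem (fun h => hmem h.2)]
    rw [heq] at hcomp
    rw [setIntegral_indicator measurableSet_Ioc,
      Set.inter_eq_self_of_subset_right Set.Ioc_subset_Ioi_self] at hcomp
    have := hcomp.symm
    rw [smul_eq_mul] at this
    have h2' : ∫ s in Set.Ioi (0:ℝ), g s
        = (4 * t) * ∫ x in Set.Ioc (0:ℝ) (R ^ 2 / (4 * t)),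
            c * ((4 * t) ^ ν * (Real.exp (-x) * x ^ ν)) := by
      rw [← this]
      field_simp
    rw [h2']
    rw [integral_const_mul, integral_const_mul]
    ring
  -- put the pieces together
  rw [h1, h2]
  have hmid : ∫ r in Set.Ioi (0 : ℝ), r ^ (n - 1) * F r
      = (1 / 2) * ((4 * t) * ((4 * t) ^ ν *
          (c * ∫ s in Set.Ioc (0 : ℝ) (R ^ 2 / (4 * t)), Real.exp (-s) * s ^ ν))) := by
    rw [← h4, h3]; ring
  rw [hmid]
  -- now only the constant computation remains
  have hvol : (volume (ball (0 : EuclideanSpace ℝ (Fin n)) 1)).toReal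
      = Real.pi ^ ((n : ℝ) / 2) / Real.Gamma ((n : ℝ) / 2 + 1) := by
    rw [EuclideanSpace.volume_ball]
    simp only [Fintype.card_fin, ENNReal.ofReal_one, one_pow, one_mul]
    rw [ENNReal.toReal_ofReal (by positivity)]
    congr 1
    rw [← Real.rpow_natCast (Real.sqrt Real.pi) n, Real.sqrt_eq_rpow,
      ← Real.rpow_mul Real.pi_nonneg]
    congr 1
    ring
  rw [hvol]
  have hn0 : (0:ℝ) < (n:ℝ) := by exact_mod_cast Nat.lt_of_lt_of_le Nat.zero_lt_one hn
  have hGpos : 0 < Real.Gamma ((n:ℝ)/2) := Real.Gamma_pos_of_pos (by positivity)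
  have hGam : Real.Gamma ((n:ℝ)/2 + 1) = ((n:ℝ)/2) * Real.Gamma ((n:ℝ)/2) :=
    Real.Gamma_add_one (by positivity)
  have hft : (4*t) * (4*t) ^ ν = (4*t) ^ ((n:ℝ)/2) := by
    rw [show ((n:ℝ)/2) = 1 + ν by rw [hν]; ring, Real.rpow_add h4t, Real.rpow_one]
  have hc2 : c = (4*t) ^ (-(n:ℝ)/2) * Real.pi ^ (-(n:ℝ)/2) := by
    rw [hc, show 4*Real.pi*t = (4*t)*Real.pi by ring,
      Real.mul_rpow (by positivity) Real.pi_nonneg]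
  have h44 : (4*t) ^ ((n:ℝ)/2) * (4*t) ^ (-(n:ℝ)/2) = 1 := by
    rw [← Real.rpow_add h4t, show (n:ℝ)/2 + -(n:ℝ)/2 = 0 by ring, Real.rpow_zero]
  have hpp : Real.pi ^ ((n:ℝ)/2) * Real.pi ^ (-(n:ℝ)/2) = 1 := by
    rw [← Real.rpow_add Real.pi_pos, show (n:ℝ)/2 + -(n:ℝ)/2 = 0 by ring, Real.rpow_zero]
  have key : (n:ℝ) * (Real.pi ^ ((n:ℝ)/2) / Real.Gamma ((n:ℝ)/2 + 1)) *
      (1/2 * ((4*t) * ((4*t) ^ ν * c))) = 1 / Real.Gamma ((n:ℝ)/2) := by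
    rw [hGam, hc2, show (4*t) * ((4*t) ^ ν * ((4*t) ^ (-(n:ℝ)/2) * Real.pi ^ (-(n:ℝ)/2)))
        = ((4*t) * (4*t) ^ ν) * (4*t) ^ (-(n:ℝ)/2) * Real.pi ^ (-(n:ℝ)/2) by ring,
      hft, h44]
    have hQ : Real.pi ^ (-(n:ℝ)/2) = (Real.pi ^ ((n:ℝ)/2))⁻¹ := by
      rw [show -(n:ℝ)/2 = -((n:ℝ)/2) by ring, Real.rpow_neg Real.pi_nonneg]
    rw [hQ]
    have hPpos : 0 < Real.pi ^ ((n:ℝ)/2) := Real.rpow_pos_of_pos Real.pi_pos _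
    field_simp
  calc (n:ℝ) * (Real.pi ^ ((n:ℝ)/2) / Real.Gamma ((n:ℝ)/2 + 1)) *
      (1/2 * ((4*t) * ((4*t) ^ ν * (c * ∫ s in Set.Ioc (0:ℝ) (R^2/(4*t)),
        Real.exp (-s) * s ^ ν))))
      = ((n:ℝ) * (Real.pi ^ ((n:ℝ)/2) / Real.Gamma ((n:ℝ)/2 + 1)) *
        (1/2 * ((4*t) * ((4*t) ^ ν * c)))) * ∫ s in Set.Ioc (0:ℝ) (R^2/(4*t)),
          Real.exp (-s) * s ^ ν := by ring
    _ = _ := by rw [key]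


lemma hk_le_iff (n : ℕ) (t₀ t₁ : ℝ) (h0 : 0 < t₀) (h01 : t₀ < t₁)
    (y : EuclideanSpace ℝ (Fin n)) :
    heatKernel n t₁ y ≤ heatKernel n t₀ y ↔
      ‖y‖ ^ 2 ≤ 4 * t₀ * t₁ * (((n : ℝ) / 2) * (Real.log t₁ - Real.log t₀) / (t₁ - t₀)) := by
  have h1 : 0 < t₁ := h0.trans h01
  have hd : (0 : ℝ) < t₁ - t₀ := by linarith
  have hk_exp : ∀ t : ℝ, 0 < t → heatKernel n t y
      = Real.exp (Real.log (4 * Real.pi * t) * (-(n : ℝ) / 2) + -‖y‖ ^ 2 / (4 * t)) := by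
    intro t ht
    rw [heatKernel, Real.rpow_def_of_pos (by positivity), ← Real.exp_add]
  rw [hk_exp t₁ h1, hk_exp t₀ h0, Real.exp_le_exp,
    Real.log_mul (by positivity) h1.ne', Real.log_mul (by positivity) h0.ne']
  have e2 : 4 * t₀ * t₁ * (((n : ℝ) / 2) * (Real.log t₁ - Real.log t₀) / (t₁ - t₀))
      = (((n : ℝ) / 2) * (Real.log t₁ - Real.log t₀) * (4 * (t₀ * t₁))) / (t₁ - t₀) := by
    ring
  rw [e2, le_div_iff₀ hd, ← sub_nonneg]
  have e : ((Real.log (4 * Real.pi) + Real.log t₀) * (-(n : ℝ) / 2) + -‖y‖ ^ 2 / (4 * t₀))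
      - ((Real.log (4 * Real.pi) + Real.log t₁) * (-(n : ℝ) / 2) + -‖y‖ ^ 2 / (4 * t₁))
      = (((n : ℝ) / 2) * (Real.log t₁ - Real.log t₀) * (4 * (t₀ * t₁))
          - ‖y‖ ^ 2 * (t₁ - t₀)) / (4 * (t₀ * t₁)) := by
    field_simp
    ring
  rw [e, le_div_iff₀ (by positivity), zero_mul, sub_nonneg]

/-- **Exact `L¹` distance of two heat kernels at different times**:
`∫ |Γ(t₁,y) - Γ(t₀,y)| dy = (2/Γ(n/2)) (G(a t₁) - G(a t₀))` with
`a = (n/2)(ln t₁ - ln t₀)/(t₁ - t₀)` and `G` the lower incomplete gamma function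
with parameter `n/2`. -/
theorem statement10 (n : ℕ) (hn : 1 ≤ n) (t₀ t₁ : ℝ) (h0 : 0 < t₀) (h01 : t₀ < t₁) :
    ∫ y : EuclideanSpace ℝ (Fin n), |heatKernel n t₁ y - heatKernel n t₀ y| =
      (2 / Real.Gamma ((n : ℝ) / 2)) *
        ((∫ s in Set.Ioc (0 : ℝ)
              (((n : ℝ) / 2) * (Real.log t₁ - Real.log t₀) / (t₁ - t₀) * t₁),
            Real.exp (-s) * s ^ ((n : ℝ) / 2 - 1)) -
         (∫ s in Set.Ioc (0 : ℝ)
              (((n : ℝ) / 2) * (Real.log t₁ - Real.log t₀) / (t₁ - t₀) * t₀),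
            Real.exp (-s) * s ^ ((n : ℝ) / 2 - 1))) := by
  have h1 : 0 < t₁ := h0.trans h01
  have hd : (0 : ℝ) < t₁ - t₀ := by linarith
  have hn0 : (0 : ℝ) < (n : ℝ) := by exact_mod_cast Nat.lt_of_lt_of_le Nat.zero_lt_one hn
  have hL : (0 : ℝ) < Real.log t₁ - Real.log t₀ := sub_pos.mpr (Real.log_lt_log h0 h01)
  set a : ℝ := ((n : ℝ) / 2) * (Real.log t₁ - Real.log t₀) / (t₁ - t₀) with ha
  have hapos : 0 < a := div_pos (by positivity) hd
  set R : ℝ := Real.sqrt (4 * t₀ * t₁ * a) with hRdef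
  have hRnn : 0 ≤ R := Real.sqrt_nonneg _
  have hR2 : R ^ 2 = 4 * t₀ * t₁ * a := Real.sq_sqrt (by positivity)
  have hi1 : Integrable (heatKernel n t₁) := hk_integrable n h1
  have hi0 : Integrable (heatKernel n t₀) := hk_integrable n h0
  have habs : ∀ y : EuclideanSpace ℝ (Fin n),
      |heatKernel n t₁ y - heatKernel n t₀ y|
        = (heatKernel n t₁ y - heatKernel n t₀ y) +
          (closedBall (0 : EuclideanSpace ℝ (Fin n)) R).indicator
            (fun y => 2 * (heatKernel n t₀ y - heatKernel n t₁ y)) y := by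
    intro y
    by_cases hy : y ∈ closedBall (0 : EuclideanSpace ℝ (Fin n)) R
    · rw [Set.indicator_of_mem hy]
      have hnorm : ‖y‖ ≤ R := mem_closedBall_zero_iff.mp hy
      have hle : heatKernel n t₁ y ≤ heatKernel n t₀ y := by
        rw [hk_le_iff n t₀ t₁ h0 h01 y, ← ha, ← hR2]
        nlinarith [norm_nonneg y]
      rw [abs_of_nonpos (by linarith)]
      ring
    · rw [Set.indicator_of_notMem hy]
      have hnorm : R < ‖y‖ := lt_of_not_ge (fun h => hy (mem_closedBall_zero_iff.mpr h))
      have hge : heatKernel n t₀ y ≤ heatKernel n t₁ y := by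
        by_contra hcon
        push_neg at hcon
        have := (hk_le_iff n t₀ t₁ h0 h01 y).mp hcon.le
        rw [← ha, ← hR2] at this
        nlinarith
      rw [abs_of_nonneg (by linarith)]
      ring
  have hind : Integrable ((closedBall (0 : EuclideanSpace ℝ (Fin n)) R).indicator
      (fun y => 2 * (heatKernel n t₀ y - heatKernel n t₁ y))) :=
    ((hi0.sub hi1).const_mul 2).indicator measurableSet_closedBall
  calc ∫ y : EuclideanSpace ℝ (Fin n), |heatKernel n t₁ y - heatKernel n t₀ y|
      = ∫ y : EuclideanSpace ℝ (Fin n), ((heatKernel n t₁ y - heatKernel n t₀ y) +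
          (closedBall (0 : EuclideanSpace ℝ (Fin n)) R).indicator
            (fun y => 2 * (heatKernel n t₀ y - heatKernel n t₁ y)) y) := by
        exact integral_congr_ae (Filter.Eventually.of_forall habs)
    _ = (∫ y : EuclideanSpace ℝ (Fin n), (heatKernel n t₁ y - heatKernel n t₀ y)) +
        ∫ y : EuclideanSpace ℝ (Fin n),
          (closedBall (0 : EuclideanSpace ℝ (Fin n)) R).indicator
            (fun y => 2 * (heatKernel n t₀ y - heatKernel n t₁ y)) y :=
        integral_add (hi1.sub hi0) hind
    _ = 0 + 2 * ((∫ y in closedBall (0 : EuclideanSpace ℝ (Fin n)) R, heatKernel n t₀ y) -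
          ∫ y in closedBall (0 : EuclideanSpace ℝ (Fin n)) R, heatKernel n t₁ y) := by
        congr 1
        · rw [integral_sub hi1 hi0, hk_mass n h1, hk_mass n h0, sub_self]
        · rw [integral_indicator measurableSet_closedBall, integral_const_mul,
            integral_sub hi0.integrableOn hi1.integrableOn]
    _ = _ := by
        rw [hk_ball n hn h0 hRnn, hk_ball n hn h1 hRnn]
        have e0 : R ^ 2 / (4 * t₀) = a * t₁ := by
          rw [hR2]; field_simp
        have e1 : R ^ 2 / (4 * t₁) = a * t₀ := by
          rw [hR2]; field_simp
        rw [e0, e1]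
        ring
end
end

section
/- Let n ≥ 1. There exists a constant C depending only on n such that for all 0 < t < t′, ∫₀^t ∫_{ℝⁿ} |Γ(t′−τ, y) − Γ(t−τ, y)| dy dτ ≤ C · (t′−t) · (1 + log(1 + t/(t′−t))). -/
open MeasureTheory
open scoped BigOperators ENNReal Topology

noncomputable section

open Real

lemma gauss_integrable (n : ℕ) {b : ℝ} (hb : 0 < b) :
    Integrable (fun v : EuclideanSpace ℝ (Fin n) => Real.exp (-(b * ‖v‖^2))) := by
  have h := (GaussianFourier.integrable_cexp_neg_mul_sq_norm_add
    (b := (b:ℂ)) (by simpa using hb) 0 (0 : EuclideanSpace ℝ (Fin n))).norm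
  simpa [Complex.norm_exp, ← Complex.ofReal_pow] using h

lemma gauss_integral (n : ℕ) {b : ℝ} (hb : 0 < b) :
    ∫ v : EuclideanSpace ℝ (Fin n), Real.exp (-(b * ‖v‖^2)) = (π / b) ^ ((n:ℝ)/2) := by
  have h := GaussianFourier.integral_rexp_neg_mul_sq_norm (V := EuclideanSpace ℝ (Fin n)) hb
  simpa [finrank_euclideanSpace_fin, neg_mul] using h

lemma hk_eq_s11 (n : ℕ) {s : ℝ} (hs : 0 < s) (x : EuclideanSpace ℝ (Fin n)) :
    heatKernel n s x = (4 * π * s) ^ (-(n : ℝ) / 2) * Real.exp (-((4*s)⁻¹ * ‖x‖^2)) := by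
  rw [heatKernel]
  congr 1
  rw [div_eq_mul_inv, neg_mul, mul_comm (‖x‖^2)]

lemma hk_nonneg (n : ℕ) {s : ℝ} (hs : 0 ≤ s) (x : EuclideanSpace ℝ (Fin n)) :
    0 ≤ heatKernel n s x :=
  mul_nonneg (Real.rpow_nonneg (by positivity) _) (Real.exp_nonneg _)

lemma hk_integrable_s11 (n : ℕ) {s : ℝ} (hs : 0 < s) :
    Integrable (fun y => heatKernel n s y) := by
  have : (fun y : EuclideanSpace ℝ (Fin n) => heatKernel n s y)
      = fun y => (4 * π * s) ^ (-(n : ℝ) / 2) * Real.exp (-((4*s)⁻¹ * ‖y‖^2)) := by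
    funext y; exact hk_eq_s11 n hs y
  rw [this]
  exact (gauss_integrable n (by positivity)).const_mul _

lemma hk_integral (n : ℕ) {s : ℝ} (hs : 0 < s) :
    ∫ y : EuclideanSpace ℝ (Fin n), heatKernel n s y = 1 := by
  simp_rw [fun y => hk_eq_s11 n hs y]
  rw [integral_const_mul, gauss_integral n (by positivity)]
  have h1 : π / (4*s)⁻¹ = 4 * π * s := by field_simp
  rw [h1, ← Real.rpow_add (by positivity), neg_div, neg_add_cancel, Real.rpow_zero]

lemma rpow_prod_inv (n : ℕ) {s : ℝ} (hs : 0 < s) :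
    (4*π*s) ^ (-(n:ℝ)/2) * (4*π*s) ^ ((n:ℝ)/2) = 1 := by
  rw [← Real.rpow_add (by positivity), neg_div, neg_add_cancel, Real.rpow_zero]

lemma hk_L1_le (n : ℕ) {u v : ℝ} (hu : 0 < u) (huv : u < v) :
    ∫ y : EuclideanSpace ℝ (Fin n), |heatKernel n v y - heatKernel n u y| ≤
      2 * ((v/u) ^ ((n:ℝ)/2) - 1) := by
  have hv : 0 < v := hu.trans huv
  set p : ℝ := (n:ℝ)/2 with hp
  set cv : ℝ := (4*π*v) ^ (-(n:ℝ)/2) with hcv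
  set cu : ℝ := (4*π*u) ^ (-(n:ℝ)/2) with hcu
  set Ev : EuclideanSpace ℝ (Fin n) → ℝ := fun y => Real.exp (-((4*v)⁻¹ * ‖y‖^2)) with hEv
  set Eu : EuclideanSpace ℝ (Fin n) → ℝ := fun y => Real.exp (-((4*u)⁻¹ * ‖y‖^2)) with hEu
  have hcvu : cv ≤ cu := by
    apply Real.rpow_le_rpow_of_nonpos (by positivity) (by nlinarith [Real.pi_pos])
    have : (0:ℝ) ≤ (n:ℝ) := Nat.cast_nonneg n
    linarith
  have hcu0 : 0 ≤ cu := Real.rpow_nonneg (by positivity) _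
  have hEuv : ∀ y, Eu y ≤ Ev y := by
    intro y
    apply Real.exp_le_exp.2
    have h1 : (4*v)⁻¹ ≤ (4*u)⁻¹ := by
      apply inv_anti₀ (by positivity); linarith
    nlinarith [sq_nonneg (‖y‖ : ℝ)]
  have hintEv : Integrable Ev := gauss_integrable n (b := (4*v)⁻¹) (by positivity)
  have hintEu : Integrable Eu := gauss_integrable n (b := (4*u)⁻¹) (by positivity)
  have hsub : Integrable (fun y => Ev y - Eu y) := hintEv.sub hintEu
  have hI1 : Integrable (fun y => (cu - cv) * Ev y) := hintEv.const_mul _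
  have hI2 : Integrable (fun y => cu * (Ev y - Eu y)) := hsub.const_mul _
  have hG : Integrable (fun y => (cu - cv) * Ev y + cu * (Ev y - Eu y)) := hI1.add hI2
  have hpt : ∀ y, |heatKernel n v y - heatKernel n u y| ≤
      (cu - cv) * Ev y + cu * (Ev y - Eu y) := by
    intro y
    rw [hk_eq_s11 n hv y, hk_eq_s11 n hu y]
    have h1 : cv * Ev y - cu * Eu y = (cv - cu) * Ev y + cu * (Ev y - Eu y) := by ring
    calc |cv * Ev y - cu * Eu y|
        = |(cv - cu) * Ev y + cu * (Ev y - Eu y)| := by rw [h1]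
      _ ≤ |(cv - cu) * Ev y| + |cu * (Ev y - Eu y)| := abs_add_le _ _
      _ = (cu - cv) * Ev y + cu * (Ev y - Eu y) := by
          rw [abs_mul, abs_mul, abs_of_nonpos (by linarith), abs_of_nonneg (Real.exp_nonneg _),
            abs_of_nonneg hcu0, abs_of_nonneg (by linarith [hEuv y])]
          ring
  have step := integral_mono_of_nonneg
    (Filter.Eventually.of_forall (fun y => abs_nonneg _)) hG
    (Filter.Eventually.of_forall hpt)
  refine step.trans ?_
  rw [integral_add hI1 hI2,
    integral_const_mul, integral_const_mul, integral_sub hintEv hintEu,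
    gauss_integral n (by positivity : (0:ℝ) < (4*v)⁻¹),
    gauss_integral n (by positivity : (0:ℝ) < (4*u)⁻¹)]
  have hAv : π / (4*v)⁻¹ = 4*π*v := by field_simp
  have hAu : π / (4*u)⁻¹ = 4*π*u := by field_simp
  rw [hAv, hAu]
  have e1 : cv * (4*π*v) ^ p = 1 := rpow_prod_inv n hv
  have e2 : cu * (4*π*u) ^ p = 1 := rpow_prod_inv n hu
  have e3 : cu * (4*π*v) ^ p = (v/u) ^ p := by
    rw [hcu, neg_div, Real.rpow_neg (by positivity), inv_mul_eq_div,
      ← Real.div_rpow (by positivity) (by positivity)]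
    congr 1
    rw [mul_div_mul_left _ _ (by positivity : (4*π) ≠ 0)]
  linear_combination 2*e3 - e1 - e2

lemma pow_one_add_le (n : ℕ) {r : ℝ} (hr : 0 < r) (hrn : (n:ℝ) * r ≤ 1) :
    (1 + r) ^ ((n:ℝ)/2) - 1 ≤ (n:ℝ) * r := by
  set u : ℝ := (n:ℝ) * r / 2 with hu
  have hu0 : 0 ≤ u := by positivity
  have hu2 : u ≤ 1/2 := by rw [hu]; linarith
  have h1 : (1 + r) ^ ((n:ℝ)/2) = Real.exp (((n:ℝ)/2) * Real.log (1+r)) := by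
    rw [Real.rpow_def_of_pos (by linarith)]; ring_nf
  have h2 : Real.log (1+r) ≤ r := by
    have := Real.log_le_sub_one_of_pos (show (0:ℝ) < 1 + r by linarith)
    linarith
  have h3 : (1 + r) ^ ((n:ℝ)/2) ≤ Real.exp u := by
    rw [h1]
    apply Real.exp_le_exp.2
    rw [hu]
    have hn0 : (0:ℝ) ≤ (n:ℝ)/2 := by positivity
    nlinarith
  have h4 : Real.exp u ≤ 1 + 2*u := by
    have h5 : 1 - u ≤ Real.exp (-u) := by
      have := Real.add_one_le_exp (-u); linarith
    have h6 : Real.exp u = (Real.exp (-u))⁻¹ := by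
      rw [← Real.exp_neg]; ring_nf
    rw [h6]
    have h7 : (0:ℝ) < 1 - u := by linarith
    have h8 : (Real.exp (-u))⁻¹ ≤ (1-u)⁻¹ :=
      inv_anti₀ h7 h5
    refine h8.trans ?_
    rw [inv_le_iff_one_le_mul₀ h7]
    nlinarith
  nlinarith

lemma hk_pt (n : ℕ) (hn : 1 ≤ n) {b δ : ℝ} (hb : 0 ≤ b) (hδ : 0 < δ) :
    ∫ y : EuclideanSpace ℝ (Fin n), |heatKernel n (b+δ) y - heatKernel n b y| ≤
      4*(n:ℝ)*δ/(b + (n:ℝ)*δ) := by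
  have hn1 : (1:ℝ) ≤ (n:ℝ) := by exact_mod_cast hn
  have hd : (0:ℝ) < b + (n:ℝ)*δ := by nlinarith
  rcases le_or_gt b ((n:ℝ)*δ) with hcase | hcase
  · -- small b : trivial bound by 2
    have htriv : ∫ y : EuclideanSpace ℝ (Fin n),
        |heatKernel n (b+δ) y - heatKernel n b y| ≤ 2 := by
      rcases eq_or_lt_of_le hb with hb0 | hb0
      · -- b = 0
        have hz : ∀ y : EuclideanSpace ℝ (Fin n), heatKernel n b y = 0 := by
          intro y
          rw [heatKernel, ← hb0]
          have hne : -(n:ℝ)/2 ≠ 0 := by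
            have : (0:ℝ) < (n:ℝ)/2 := by linarith
            intro h
            rw [neg_div, neg_eq_zero] at h
            linarith
          rw [mul_zero, Real.zero_rpow hne, zero_mul]
        have : ∀ y : EuclideanSpace ℝ (Fin n),
            |heatKernel n (b+δ) y - heatKernel n b y| = heatKernel n (b+δ) y := by
          intro y
          rw [hz y, sub_zero, abs_of_nonneg (hk_nonneg n (by linarith) y)]
        simp_rw [this]
        rw [hk_integral n (by linarith : (0:ℝ) < b + δ)]
        norm_num
      · -- 0 < b
        have hIa := hk_integrable_s11 n (show (0:ℝ) < b + δ by linarith)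
        have hIb := hk_integrable_s11 n hb0
        have hsum : Integrable (fun y : EuclideanSpace ℝ (Fin n) =>
            heatKernel n (b+δ) y + heatKernel n b y) := hIa.add hIb
        have step := integral_mono_of_nonneg
          (f := fun y : EuclideanSpace ℝ (Fin n) =>
            |heatKernel n (b+δ) y - heatKernel n b y|)
          (Filter.Eventually.of_forall (fun y => abs_nonneg _)) hsum
          (Filter.Eventually.of_forall (fun y => by
            have h1 := hk_nonneg n (show (0:ℝ) ≤ b + δ by linarith) y
            have h2 := hk_nonneg n hb0.le y
            show |heatKernel n (b+δ) y - heatKernel n b y| ≤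
              heatKernel n (b+δ) y + heatKernel n b y
            exact abs_le.mpr ⟨by linarith, by linarith⟩))
        refine step.trans ?_
        rw [integral_add hIa hIb, hk_integral n (by linarith : (0:ℝ) < b + δ),
          hk_integral n hb0]
        norm_num
    refine htriv.trans ?_
    rw [le_div_iff₀ hd]
    nlinarith
  · -- large b : use L1 bound
    have hb0 : (0:ℝ) < b := lt_of_le_of_lt (by positivity) hcase
    have h1 := hk_L1_le n hb0 (show b < b + δ by linarith)
    have h2 : (b+δ)/b = 1 + δ/b := by field_simp
    have h3 : (0:ℝ) < δ/b := by positivity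
    have h4 : (n:ℝ) * (δ/b) ≤ 1 := by
      rw [← mul_div_assoc, div_le_one hb0]
      exact hcase.le
    have h5 := pow_one_add_le n h3 h4
    refine h1.trans ?_
    rw [h2]
    have h6 : 2 * ((1 + δ/b) ^ ((n:ℝ)/2) - 1) ≤ 2 * ((n:ℝ) * (δ/b)) := by linarith
    refine h6.trans ?_
    have h7 : 2 * ((n:ℝ) * (δ/b)) = (2*(n:ℝ)*δ)/b := by ring
    rw [h7, div_le_div_iff₀ hb0 hd]
    nlinarith [mul_le_mul_of_nonneg_left hcase.le (show (0:ℝ) ≤ 2*(n:ℝ)*δ by nlinarith)]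

/-- **Integrated `L¹` distance of shifted heat kernels** (estimate for
`I = ∫₀^t ∫ |Γ(t'-τ,y) - Γ(t-τ,y)| dy dτ ≤ C (t'-t)(1 + log(1 + t/(t'-t)))`). -/
theorem statement11 (n : ℕ) (hn : 1 ≤ n) :
    ∃ C : ℝ, 0 < C ∧ ∀ t t' : ℝ, 0 < t → t < t' →
      (∫ τ in Set.Ioc (0 : ℝ) t, ∫ y : EuclideanSpace ℝ (Fin n),
          |heatKernel n (t' - τ) y - heatKernel n (t - τ) y|) ≤
        C * (t' - t) * (1 + Real.log (1 + t / (t' - t))) := by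
  have hn1 : (1:ℝ) ≤ (n:ℝ) := by exact_mod_cast hn
  refine ⟨4*(n:ℝ), by linarith, fun t t' ht htt' => ?_⟩
  set δ : ℝ := t' - t with hδdef
  have hδ : 0 < δ := by simp [hδdef]; linarith
  set c : ℝ := (n:ℝ) * δ with hc
  have hc0 : 0 < c := by positivity
  -- the dominating function
  set h : ℝ → ℝ := fun τ => 4*(n:ℝ)*δ * ((t + c) - τ)⁻¹ with hh
  have hcont : ContinuousOn h (Set.Icc 0 t) := by
    apply ContinuousOn.mul continuousOn_const
    apply ContinuousOn.inv₀ (by fun_prop)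
    intro τ hτ
    have := hτ.2
    have : (0:ℝ) < t + c - τ := by linarith
    linarith
  have hInt : IntegrableOn h (Set.Ioc 0 t) :=
    (hcont.integrableOn_Icc).mono_set Set.Ioc_subset_Icc_self
  have hmono : (∫ τ in Set.Ioc (0 : ℝ) t, ∫ y : EuclideanSpace ℝ (Fin n),
      |heatKernel n (t' - τ) y - heatKernel n (t - τ) y|) ≤ ∫ τ in Set.Ioc (0:ℝ) t, h τ := by
    apply integral_mono_of_nonneg
    · exact Filter.Eventually.of_forall (fun τ => integral_nonneg (fun y => abs_nonneg _))
    · exact hInt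
    · apply ae_restrict_of_forall_mem measurableSet_Ioc
      intro τ hτ
      have hb0 : (0:ℝ) ≤ t - τ := by linarith [hτ.2]
      have key := hk_pt n hn hb0 hδ
      have e1 : t - τ + δ = t' - τ := by rw [hδdef]; ring
      rw [e1] at key
      refine key.trans ?_
      rw [hh]
      have e2 : 4*(n:ℝ)*δ/(t - τ + (n:ℝ)*δ) = 4*(n:ℝ)*δ * ((t + c) - τ)⁻¹ := by
        rw [div_eq_mul_inv, hc]
        congr 2
        ring
      rw [e2]
  refine hmono.trans ?_
  have e3 : (∫ τ in Set.Ioc (0:ℝ) t, h τ) = ∫ τ in (0:ℝ)..t, h τ :=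
    (intervalIntegral.integral_of_le ht.le).symm
  rw [e3, hh]
  simp_rw [intervalIntegral.integral_const_mul]
  rw [show (∫ τ in (0:ℝ)..t, ((t + c) - τ)⁻¹) = ∫ u in (t+c) - t..(t+c) - 0, u⁻¹ from
    intervalIntegral.integral_comp_sub_left (fun u => u⁻¹) (t+c)]
  have e4 : t + c - t = c := by ring
  have e5 : t + c - 0 = t + c := by ring
  rw [e4, e5, integral_inv_of_pos hc0 (by linarith)]
  -- now: 4 n δ * log ((t+c)/c) ≤ 4 n (t'-t) (1 + log (1 + t/(t'-t)))
  have harg : (0:ℝ) < (t+c)/c := by positivity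
  have hlog1 : Real.log ((t+c)/c) ≤ Real.log (1 + t/δ) := by
    apply Real.log_le_log harg
    rw [div_le_iff₀ hc0]
    have : (1 + t/δ) * c = c + t/δ*((n:ℝ)*δ) := by rw [hc]; ring
    rw [this]
    have : t/δ*((n:ℝ)*δ) = t * (n:ℝ) := by field_simp
    rw [this]
    nlinarith
  have hlog0 : 0 ≤ Real.log (1 + t/δ) := by
    apply Real.log_nonneg
    have : 0 < t/δ := by positivity
    linarith
  have hfin : 4*(n:ℝ)*δ * Real.log ((t+c)/c) ≤ 4*(n:ℝ) * δ * (1 + Real.log (1 + t/δ)) := by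
    have h1 : 4*(n:ℝ)*δ * Real.log ((t+c)/c) ≤ 4*(n:ℝ)*δ * Real.log (1 + t/δ) := by
      apply mul_le_mul_of_nonneg_left hlog1 (by positivity)
    refine h1.trans ?_
    apply mul_le_mul_of_nonneg_left _ (by positivity : (0:ℝ) ≤ 4*(n:ℝ)*δ)
    linarith
  exact hfin
end
end

section
/- Let n ≥ 1 be an integer, m ∈ (0,1), B > 0, and let I ⊆ ℝ be an open interval. Suppose u : I×ℝⁿ → (0,∞) is continuously differentiable in t and twice continuously differentiable in x, and satisfies the rescaled fast diffusion equation ∂_t u = (1/m)Δ(uᵐ) + (2/(1−m))·∇·(x·u) pointwise on I×ℝⁿ (where ∇·(x·u) = Σᵢ ∂_{xᵢ}(xᵢ u)). Then v := u/u_B satisfies, pointwise on I×ℝⁿ, ∂_t v = (1/m)·(B+|x|²)·Δ(vᵐ) + (2/(1−m))·[ x·∇(v − 2vᵐ) + (n − (2/(1−m))·|x|²/(B+|x|²))·(v − vᵐ) ]. -/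
open MeasureTheory Filter
open scoped BigOperators ENNReal Topology

noncomputable section

/-- The `i`-th standard basis vector of `ℝⁿ`. -/
def stdBasis (n : ℕ) (i : Fin n) : EuclideanSpace ℝ (Fin n) :=
  EuclideanSpace.single i 1

/-- The Laplacian (sum of second partial derivatives) of `f : ℝⁿ → ℝ`. -/
def lap (n : ℕ) (f : EuclideanSpace ℝ (Fin n) → ℝ) (x : EuclideanSpace ℝ (Fin n)) : ℝ :=
  ∑ i : Fin n, fderiv ℝ (fun y => fderiv ℝ f y (stdBasis n i)) x (stdBasis n i)

/-- `x · ∇f x`. -/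
def gradDot (n : ℕ) (f : EuclideanSpace ℝ (Fin n) → ℝ) (x : EuclideanSpace ℝ (Fin n)) : ℝ :=
  ∑ i : Fin n, x i * fderiv ℝ f x (stdBasis n i)

/-- The moment parameter `p = 2/(1-m) - n`. -/
def pPar (n : ℕ) (m : ℝ) : ℝ := 2 / (1 - m) - n

/-- The scaling exponent `β = (1 + n/p)/2`. -/
def betaPar (n : ℕ) (m : ℝ) : ℝ := (1 + n / pPar n m) / 2

/-- The Barenblatt profile `u_B(x) = (B + |x|²)^{-1/(1-m)}`. -/
def uB (n : ℕ) (m B : ℝ) (x : EuclideanSpace ℝ (Fin n)) : ℝ :=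
  (B + ‖x‖ ^ 2) ^ (-(1 / (1 - m)))

/-- The Barenblatt solution `ρ_B(τ,y) = (1+2pτ)^{-nβ} u_B((1+2pτ)^{-β} y)`. -/
def rhoB (n : ℕ) (m B : ℝ) (τ : ℝ) (y : EuclideanSpace ℝ (Fin n)) : ℝ :=
  (1 + 2 * pPar n m * τ) ^ (-(n : ℝ) * betaPar n m) *
    uB n m B ((1 + 2 * pPar n m * τ) ^ (-betaPar n m) • y)

/-- A (positive, continuous up to time 0, smooth for positive times) solution of the
fast diffusion equation `∂_τ ρ = (1/m) Δ (ρ^m)` on `[0,∞) × ℝⁿ`. -/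
def IsFDESol (n : ℕ) (m : ℝ) (ρ : ℝ → EuclideanSpace ℝ (Fin n) → ℝ) : Prop :=
  (∀ τ ∈ Set.Ici (0 : ℝ), ∀ y, 0 < ρ τ y) ∧
  ContinuousOn (fun q : ℝ × EuclideanSpace ℝ (Fin n) => ρ q.1 q.2)
    (Set.Ici 0 ×ˢ Set.univ) ∧
  ContDiffOn ℝ (⊤ : ℕ∞) (fun q : ℝ × EuclideanSpace ℝ (Fin n) => ρ q.1 q.2)
    (Set.Ioi 0 ×ˢ Set.univ) ∧
  ∀ τ ∈ Set.Ioi (0 : ℝ), ∀ y,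
    deriv (fun s => ρ s y) τ = (1 / m) * lap n (fun x => ρ τ x ^ m) y

variable {n : ℕ}

lemma euclid_norm_sq (x : EuclideanSpace ℝ (Fin n)) : ‖x‖ ^ 2 = ∑ i, x i ^ 2 := by
  rw [EuclideanSpace.norm_eq, Real.sq_sqrt (by positivity)]
  simp [sq_abs]

lemma inner_stdBasis (x : EuclideanSpace ℝ (Fin n)) (i : Fin n) :
    (innerSL ℝ x) (stdBasis n i) = x i := by
  unfold stdBasis
  rw [innerSL_apply_apply, EuclideanSpace.inner_single_right]
  simp

lemma hasFDerivAt_coord (i : Fin n) (x : EuclideanSpace ℝ (Fin n)) :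
    HasFDerivAt (fun z : EuclideanSpace ℝ (Fin n) => z i)
      (EuclideanSpace.proj (𝕜 := ℝ) i) x :=
  (EuclideanSpace.proj (𝕜 := ℝ) i).hasFDerivAt

lemma proj_stdBasis (i j : Fin n) :
    (EuclideanSpace.proj (𝕜 := ℝ) j) (stdBasis n i) = if j = i then 1 else 0 := by
  simp [stdBasis, EuclideanSpace.single_apply]

lemma hasFDerivAt_W (B : ℝ) (y : EuclideanSpace ℝ (Fin n)) :
    HasFDerivAt (fun z : EuclideanSpace ℝ (Fin n) => B + ‖z‖ ^ 2)
      (2 • (innerSL ℝ y)) y :=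
  ((hasStrictFDerivAt_norm_sq y).hasFDerivAt).const_add B

lemma hasFDerivAt_Wpow {B : ℝ} (hB : 0 < B) (a : ℝ) (y : EuclideanSpace ℝ (Fin n)) :
    HasFDerivAt (fun z : EuclideanSpace ℝ (Fin n) => (B + ‖z‖ ^ 2) ^ a)
      ((a * (B + ‖y‖ ^ 2) ^ (a - 1)) • (2 • (innerSL ℝ y))) y := by
  have hW : (0:ℝ) < B + ‖y‖ ^ 2 := by positivity
  exact (hasFDerivAt_W B y).rpow_const (Or.inl hW.ne')

lemma fderiv_Wpow_apply {B : ℝ} (hB : 0 < B) (a : ℝ) (y : EuclideanSpace ℝ (Fin n)) (i : Fin n) :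
    fderiv ℝ (fun z : EuclideanSpace ℝ (Fin n) => (B + ‖z‖ ^ 2) ^ a) y (stdBasis n i)
      = a * (B + ‖y‖ ^ 2) ^ (a - 1) * (2 * y i) := by
  rw [(hasFDerivAt_Wpow hB a y).fderiv]
  simp only [ContinuousLinearMap.coe_smul', Pi.smul_apply, smul_eq_mul]
  rw [inner_stdBasis]
  ring

lemma contDiffAt_Wpow {B : ℝ} (hB : 0 < B) (a : ℝ) (y : EuclideanSpace ℝ (Fin n)) :
    ContDiffAt ℝ 2 (fun z : EuclideanSpace ℝ (Fin n) => (B + ‖z‖ ^ 2) ^ a) y := by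
  have hW : (0:ℝ) < B + ‖y‖ ^ 2 := by positivity
  exact (ContDiffAt.rpow_const_of_ne
    ((contDiff_const.add (contDiff_norm_sq ℝ)).contDiffAt) hW.ne')

lemma lap_Wpow {B : ℝ} (hB : 0 < B) (a : ℝ) (x : EuclideanSpace ℝ (Fin n)) :
    lap n (fun z : EuclideanSpace ℝ (Fin n) => (B + ‖z‖ ^ 2) ^ a) x
      = 2 * a * (2 * (a - 1) * (B + ‖x‖ ^ 2) ^ (a - 2) * ‖x‖ ^ 2
          + n * (B + ‖x‖ ^ 2) ^ (a - 1)) := by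
  have key : ∀ i : Fin n,
      fderiv ℝ (fun y => fderiv ℝ (fun z : EuclideanSpace ℝ (Fin n) => (B + ‖z‖ ^ 2) ^ a) y
        (stdBasis n i)) x (stdBasis n i)
      = (4 * a * (a-1) * (B + ‖x‖ ^ 2) ^ (a - 2)) * (x i * x i)
          + 2 * a * (B + ‖x‖ ^ 2) ^ (a - 1) := by
    intro i
    have hfun : (fun y => fderiv ℝ (fun z : EuclideanSpace ℝ (Fin n) => (B + ‖z‖ ^ 2) ^ a) y
        (stdBasis n i))
        = fun y => (2 * a) * ((B + ‖y‖ ^ 2) ^ (a - 1) * y i) := by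
      funext y
      rw [fderiv_Wpow_apply hB a y i]; ring
    rw [hfun]
    have h1 := (hasFDerivAt_Wpow hB (a-1) x).mul' (hasFDerivAt_coord i x)
    have h2 := (h1.const_mul (2*a)).fderiv
    rw [show (fun y : EuclideanSpace ℝ (Fin n) => 2 * a * ((B + ‖y‖ ^ 2) ^ (a - 1) * y i)) = (fun y : EuclideanSpace ℝ (Fin n) => 2 * a * (((fun z : EuclideanSpace ℝ (Fin n) => (B + ‖z‖ ^ 2) ^ (a - 1)) * fun z : EuclideanSpace ℝ (Fin n) => z i) y)) from rfl, h2]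
    simp only [ContinuousLinearMap.coe_smul', Pi.smul_apply, ContinuousLinearMap.add_apply,
      ContinuousLinearMap.smul_apply, ContinuousLinearMap.smulRight_apply, smul_eq_mul, op_smul_eq_mul]
    rw [proj_stdBasis, inner_stdBasis]
    simp only [if_pos rfl, if_true, eq_self_iff_true]
    rw [show a - 1 - 1 = a - 2 by ring]
    ring
  rw [lap, Finset.sum_congr rfl fun i _ => key i]
  rw [Finset.sum_add_distrib, ← Finset.mul_sum, Finset.sum_const, Finset.card_univ,
    Fintype.card_fin]
  have hx2 : ∑ i, x i * x i = ‖x‖ ^ 2 := by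
    rw [euclid_norm_sq]
    exact Finset.sum_congr rfl fun i _ => (sq (x i)).symm
  rw [hx2]
  push_cast
  ring

lemma lap_mul {f g : EuclideanSpace ℝ (Fin n) → ℝ}
    (hf : ∀ y, ContDiffAt ℝ 2 f y) (hg : ∀ y, ContDiffAt ℝ 2 g y)
    (x : EuclideanSpace ℝ (Fin n)) :
    lap n (fun z => f z * g z) x
      = lap n f x * g x
        + 2 * ∑ i, fderiv ℝ f x (stdBasis n i) * fderiv ℝ g x (stdBasis n i)
        + f x * lap n g x := by
  have hfd : ∀ y, DifferentiableAt ℝ f y := fun y => (hf y).differentiableAt (by norm_num)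
  have hgd : ∀ y, DifferentiableAt ℝ g y := fun y => (hg y).differentiableAt (by norm_num)
  have hDf : ∀ i : Fin n, DifferentiableAt ℝ (fun y => fderiv ℝ f y (stdBasis n i)) x := by
    intro i
    have h := ((hf x).fderiv_right (m := 1) (by norm_num)).differentiableAt (by norm_num)
    exact (ContinuousLinearMap.apply ℝ ℝ (stdBasis n i)).differentiable.differentiableAt.comp x h
  have hDg : ∀ i : Fin n, DifferentiableAt ℝ (fun y => fderiv ℝ g y (stdBasis n i)) x := by
    intro i
    have h := ((hg x).fderiv_right (m := 1) (by norm_num)).differentiableAt (by norm_num)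
    exact (ContinuousLinearMap.apply ℝ ℝ (stdBasis n i)).differentiable.differentiableAt.comp x h
  have key : ∀ i : Fin n,
      fderiv ℝ (fun y => fderiv ℝ (fun z => f z * g z) y (stdBasis n i)) x (stdBasis n i)
      = (f x * fderiv ℝ (fun y => fderiv ℝ g y (stdBasis n i)) x (stdBasis n i)
          + fderiv ℝ g x (stdBasis n i) * fderiv ℝ f x (stdBasis n i))
        + (g x * fderiv ℝ (fun y => fderiv ℝ f y (stdBasis n i)) x (stdBasis n i)
          + fderiv ℝ f x (stdBasis n i) * fderiv ℝ g x (stdBasis n i)) := by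
    intro i
    have hfun : (fun y => fderiv ℝ (fun z => f z * g z) y (stdBasis n i))
        = fun y => f y * fderiv ℝ g y (stdBasis n i) + g y * fderiv ℝ f y (stdBasis n i) := by
      funext y
      rw [fderiv_fun_mul (hfd y) (hgd y)]
      simp [smul_eq_mul]
    rw [hfun]
    rw [fderiv_fun_add ((hfd x).fun_mul (hDg i)) ((hgd x).fun_mul (hDf i))]
    rw [ContinuousLinearMap.add_apply]
    rw [fderiv_fun_mul (hfd x) (hDg i), fderiv_fun_mul (hgd x) (hDf i)]
    simp [smul_eq_mul]
  rw [lap, Finset.sum_congr rfl fun i _ => key i, Finset.sum_add_distrib]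
  rw [Finset.sum_add_distrib, Finset.sum_add_distrib, ← Finset.mul_sum, ← Finset.mul_sum]
  rw [lap, lap]
  ring_nf
  rw [Finset.sum_congr rfl fun (i : Fin n) _ =>
    mul_comm (fderiv ℝ g x (stdBasis n i)) (fderiv ℝ f x (stdBasis n i))]
  ring

lemma sum_helper (x : EuclideanSpace ℝ (Fin n)) (f1 f2 : Fin n → ℝ) (a b d : ℝ) :
    ∑ i, (a * (x i * f1 i) + b * (x i * f2 i) + d * (x i * x i))
      = a * (∑ i, x i * f1 i) + b * (∑ i, x i * f2 i) + d * ‖x‖ ^ 2 := by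
  rw [Finset.sum_add_distrib, Finset.sum_add_distrib, ← Finset.mul_sum, ← Finset.mul_sum,
    ← Finset.mul_sum]
  have hx2 : ∑ i, x i * x i = ‖x‖ ^ 2 := by
    rw [euclid_norm_sq]
    exact Finset.sum_congr rfl fun i _ => (sq (x i)).symm
  rw [hx2]

/-- **The equation for the relative density `v = u/u_B`** (equation (eqv)):
if `u` solves the rescaled fast diffusion equation on an open interval `I`, then
`v_t = (1/m)(B+|x|²)Δ(v^m) + (2/(1-m))[x·∇(v-2v^m) + (n - (2/(1-m))|x|²/(B+|x|²))(v-v^m)]`. -/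
theorem statement17
    (n : ℕ) (hn : 1 ≤ n) (m : ℝ) (hm0 : 0 < m) (hm1 : m < 1)
    (B : ℝ) (hB : 0 < B)
    (I : Set ℝ) (hIopen : IsOpen I) (hIconn : I.OrdConnected)
    (u : ℝ → EuclideanSpace ℝ (Fin n) → ℝ)
    (hpos : ∀ t ∈ I, ∀ x, 0 < u t x)
    (hreg_t : ∀ x, ContDiffOn ℝ 1 (fun t => u t x) I)
    (hreg_x : ∀ t ∈ I, ContDiff ℝ 2 (fun x => u t x))
    (hPDE : ∀ t ∈ I, ∀ y,
      deriv (fun s => u s y) t =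
        (1 / m) * lap n (fun x => u t x ^ m) y +
          (2 / (1 - m)) *
            ∑ i : Fin n, fderiv ℝ (fun x => x i * u t x) y (stdBasis n i)) :
    ∀ t ∈ I, ∀ x : EuclideanSpace ℝ (Fin n),
      deriv (fun s => u s x / uB n m B x) t =
        (1 / m) * (B + ‖x‖ ^ 2) * lap n (fun z => (u t z / uB n m B z) ^ m) x +
          (2 / (1 - m)) *
            (gradDot n (fun z => u t z / uB n m B z - 2 * (u t z / uB n m B z) ^ m) x +
              ((n : ℝ) - (2 / (1 - m)) * ‖x‖ ^ 2 / (B + ‖x‖ ^ 2)) *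
                (u t x / uB n m B x - (u t x / uB n m B x) ^ m)) := by
  intro t ht x
  have h1m : (0:ℝ) < 1 - m := by linarith
  set c : ℝ := 1 / (1 - m) with hc
  have hcm : m * c = c - 1 := by
    rw [hc]; field_simp; ring
  have hW : (0:ℝ) < B + ‖x‖ ^ 2 := by positivity
  have hWz : ∀ z : EuclideanSpace ℝ (Fin n), (0:ℝ) < B + ‖z‖ ^ 2 := fun z => by positivity
  -- pointwise rewriting of v and v^m
  have hv : ∀ z, u t z / uB n m B z = u t z * (B + ‖z‖ ^ 2) ^ c := by
    intro z
    rw [uB, ← hc, Real.rpow_neg (hWz z).le, div_eq_mul_inv, inv_inv]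
  have hvm : ∀ z, (u t z / uB n m B z) ^ m = u t z ^ m * (B + ‖z‖ ^ 2) ^ (c - 1) := by
    intro z
    rw [hv z, Real.mul_rpow (hpos t ht z).le (Real.rpow_nonneg (hWz z).le _),
      ← Real.rpow_mul (hWz z).le, show c * m = c - 1 from by rw [mul_comm]; exact hcm]
  -- time derivative
  have hder : deriv (fun s => u s x / uB n m B x) t
      = deriv (fun s => u s x) t * (B + ‖x‖ ^ 2) ^ c := by
    rw [deriv_div_const, uB, ← hc, Real.rpow_neg hW.le, div_eq_mul_inv, inv_inv]
  rw [hder, hPDE t ht x]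
  -- divergence term
  have hFd : ∀ y, DifferentiableAt ℝ (fun z => u t z) y :=
    fun y => ((hreg_x t ht).differentiable (by norm_num)).differentiableAt
  have hdiv : ∀ i : Fin n, fderiv ℝ (fun z => z i * u t z) x (stdBasis n i)
      = x i * fderiv ℝ (fun z => u t z) x (stdBasis n i) + u t x := by
    intro i
    rw [fderiv_fun_mul ((hasFDerivAt_coord i x).differentiableAt) (hFd x)]
    rw [ContinuousLinearMap.add_apply, ContinuousLinearMap.smul_apply,
      ContinuousLinearMap.smul_apply, (hasFDerivAt_coord i x).fderiv, proj_stdBasis]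
    simp
  have hdivsum : ∑ i : Fin n, fderiv ℝ (fun z => z i * u t z) x (stdBasis n i)
      = gradDot n (fun z => u t z) x + n * u t x := by
    rw [Finset.sum_congr rfl fun i _ => hdiv i, Finset.sum_add_distrib, Finset.sum_const,
      Finset.card_univ, Fintype.card_fin, nsmul_eq_mul, gradDot]
  rw [hdivsum]
  -- the Laplacian of v^m
  have hFm : ∀ y, ContDiffAt ℝ 2 (fun z => u t z ^ m) y :=
    fun y => ContDiffAt.rpow_const_of_ne ((hreg_x t ht).contDiffAt) (hpos t ht y).ne'
  have hvmfun : (fun z => (u t z / uB n m B z) ^ m)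
      = fun z => (u t z ^ m) * ((B + ‖z‖ ^ 2) ^ (c - 1)) := funext hvm
  rw [hvmfun, lap_mul hFm (fun y => contDiffAt_Wpow hB (c-1) y) x, lap_Wpow hB (c-1) x]
  have hcross : ∑ i : Fin n, fderiv ℝ (fun z => u t z ^ m) x (stdBasis n i)
        * fderiv ℝ (fun z => (B + ‖z‖ ^ 2) ^ (c-1)) x (stdBasis n i)
      = 2 * (c-1) * (B + ‖x‖ ^ 2) ^ (c-1-1) * gradDot n (fun z => u t z ^ m) x := by
    rw [gradDot, Finset.mul_sum]
    refine Finset.sum_congr rfl fun i _ => ?_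
    rw [fderiv_Wpow_apply hB (c-1) x i]
    ring
  rw [hcross]
  -- the gradient term
  have hFmd : ∀ y, DifferentiableAt ℝ (fun z => u t z ^ m) y :=
    fun y => (hFm y).differentiableAt (by norm_num)
  have hWd : ∀ (a : ℝ) (y : EuclideanSpace ℝ (Fin n)),
      DifferentiableAt ℝ (fun z : EuclideanSpace ℝ (Fin n) => (B + ‖z‖ ^ 2) ^ a) y :=
    fun a y => (hasFDerivAt_Wpow hB a y).differentiableAt
  have hgdfun : (fun z => u t z / uB n m B z - 2 * (u t z / uB n m B z) ^ m)
      = fun z => u t z * (B + ‖z‖ ^ 2) ^ c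
          - 2 * (u t z ^ m * (B + ‖z‖ ^ 2) ^ (c - 1)) := by
    funext z; rw [hvm z, hv z]
  rw [hgdfun]
  have hDi : ∀ i : Fin n,
      fderiv ℝ (fun z => u t z * (B + ‖z‖ ^ 2) ^ c
          - 2 * (u t z ^ m * (B + ‖z‖ ^ 2) ^ (c - 1))) x (stdBasis n i)
      = (u t x * (c * (B + ‖x‖ ^ 2) ^ (c-1) * (2 * x i))
          + (B + ‖x‖ ^ 2) ^ c * fderiv ℝ (fun z => u t z) x (stdBasis n i))
        - 2 * (u t x ^ m * ((c-1) * (B + ‖x‖ ^ 2) ^ (c-1-1) * (2 * x i))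
          + (B + ‖x‖ ^ 2) ^ (c-1) * fderiv ℝ (fun z => u t z ^ m) x (stdBasis n i)) := by
    intro i
    rw [fderiv_fun_sub ((hFd x).fun_mul (hWd c x)) (((hFmd x).fun_mul (hWd (c-1) x)).const_mul 2)]
    rw [ContinuousLinearMap.sub_apply]
    rw [fderiv_const_mul ((hFmd x).fun_mul (hWd (c-1) x)) 2, ContinuousLinearMap.smul_apply]
    rw [fderiv_fun_mul (hFd x) (hWd c x), fderiv_fun_mul (hFmd x) (hWd (c-1) x)]
    simp only [ContinuousLinearMap.add_apply, ContinuousLinearMap.smul_apply, smul_eq_mul]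
    rw [fderiv_Wpow_apply hB c x i, fderiv_Wpow_apply hB (c-1) x i]
  have hgradDot : gradDot n (fun z => u t z * (B + ‖z‖ ^ 2) ^ c
        - 2 * (u t z ^ m * (B + ‖z‖ ^ 2) ^ (c - 1))) x
      = (B + ‖x‖ ^ 2) ^ c * gradDot n (fun z => u t z) x
        + (-2) * (B + ‖x‖ ^ 2) ^ (c-1) * gradDot n (fun z => u t z ^ m) x
        + (2 * c * (B + ‖x‖ ^ 2) ^ (c-1) * u t x
            - 4 * (c-1) * (B + ‖x‖ ^ 2) ^ (c-1-1) * u t x ^ m) * ‖x‖ ^ 2 := by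
    rw [gradDot]
    have : ∀ i : Fin n, x i * fderiv ℝ (fun z => u t z * (B + ‖z‖ ^ 2) ^ c
          - 2 * (u t z ^ m * (B + ‖z‖ ^ 2) ^ (c - 1))) x (stdBasis n i)
        = ((B + ‖x‖ ^ 2) ^ c) * (x i * fderiv ℝ (fun z => u t z) x (stdBasis n i))
          + ((-2) * (B + ‖x‖ ^ 2) ^ (c-1)) * (x i * fderiv ℝ (fun z => u t z ^ m) x (stdBasis n i))
          + (2 * c * (B + ‖x‖ ^ 2) ^ (c-1) * u t x
              - 4 * (c-1) * (B + ‖x‖ ^ 2) ^ (c-1-1) * u t x ^ m) * (x i * x i) := by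
      intro i; rw [hDi i]; ring
    rw [Finset.sum_congr rfl fun i _ => this i, sum_helper, gradDot, gradDot]
  rw [hgradDot, hvm x, hv x]
  have hp1 : (B + ‖x‖ ^ 2) ^ (c-1-1) = (B + ‖x‖ ^ 2) ^ (c-1-2) * (B + ‖x‖ ^ 2) := by
    rw [← Real.rpow_add_one hW.ne' (c-1-2)]; congr 1; ring
  have hp2 : (B + ‖x‖ ^ 2) ^ (c-1) = (B + ‖x‖ ^ 2) ^ (c-1-1) * (B + ‖x‖ ^ 2) := by
    rw [← Real.rpow_add_one hW.ne' (c-1-1)]; congr 1; ring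
  have hp3 : (B + ‖x‖ ^ 2) ^ c = (B + ‖x‖ ^ 2) ^ (c-1) * (B + ‖x‖ ^ 2) := by
    rw [← Real.rpow_add_one hW.ne' (c-1)]; congr 1; ring
  rw [hp3, hp2, hp1]
  rw [hc]
  field_simp
  ring
end
end

section
/- Let n ≥ 2 be an integer and p > 2 a real number. If ℓ, k ∈ ℕ satisfy 1 < ℓ + 2k, ℓ + 2k < p/2 + 1, and (ℓ+2k)p + nℓ + 4k(1−ℓ−k) < 4p, then (ℓ,k) is one of the eight pairs (0,1), (0,2), (0,3), (1,1), (1,2), (2,0), (2,1), (3,0). Equivalently: setting λ_{ℓk} := −((ℓ+2k)p + nℓ + 4k(1−ℓ−k)), the only pairs (ℓ,k) with 1 < ℓ+2k < p/2+1 and −4p < λ_{ℓk} are among those eight, corresponding to the eigenvalues λ_{01}, λ_{02}, λ_{03}, λ_{11}, λ_{12}, λ_{20}, λ_{21}, λ_{30}. -/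
/-- **At most eight eigenvalues can appear in the expansion** (Remark eight):
if `n ≥ 2`, `p > 2`, `1 < ℓ + 2k < p/2 + 1` and `-λ_{ℓk} = (ℓ+2k)p + nℓ + 4k(1-ℓ-k) < 4p`,
then `(ℓ,k)` is one of `(0,1), (0,2), (0,3), (1,1), (1,2), (2,0), (2,1), (3,0)`. -/
theorem statement18
    (n : ℕ) (hn : 2 ≤ n) (p : ℝ) (hp : 2 < p) (ℓ k : ℕ)
    (h1 : 1 < ℓ + 2 * k)
    (h2 : (ℓ : ℝ) + 2 * (k : ℝ) < p / 2 + 1)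
    (h3 : ((ℓ : ℝ) + 2 * (k : ℝ)) * p + (n : ℝ) * (ℓ : ℝ) +
        4 * (k : ℝ) * (1 - (ℓ : ℝ) - (k : ℝ)) < 4 * p) :
    (ℓ, k) = (0, 1) ∨ (ℓ, k) = (0, 2) ∨ (ℓ, k) = (0, 3) ∨ (ℓ, k) = (1, 1) ∨
    (ℓ, k) = (1, 2) ∨ (ℓ, k) = (2, 0) ∨ (ℓ, k) = (2, 1) ∨ (ℓ, k) = (3, 0) := by
  have hn' : (2:ℝ) ≤ (n:ℝ) := by exact_mod_cast hn
  have hk0 : (0:ℝ) ≤ (k:ℝ) := Nat.cast_nonneg k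
  have hl0 : (0:ℝ) ≤ (ℓ:ℝ) := Nat.cast_nonneg ℓ
  have hm : ℓ + 2 * k ≤ 9 := by
    by_contra h
    push_neg at h
    have h10 : (10:ℝ) ≤ (ℓ:ℝ) + 2 * (k:ℝ) := by
      have : (10:ℕ) ≤ ℓ + 2 * k := h
      calc (10:ℝ) = ((10:ℕ):ℝ) := by norm_num
        _ ≤ ((ℓ + 2*k : ℕ):ℝ) := by exact_mod_cast this
        _ = (ℓ:ℝ) + 2 * (k:ℝ) := by push_cast; ring
    nlinarith [sq_nonneg ((ℓ:ℝ) + 2*(k:ℝ) - 4), mul_nonneg (by linarith : (0:ℝ) ≤ (n:ℝ)) hl0,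
      sq_nonneg (ℓ:ℝ)]
  have hk : k ≤ 4 := by omega
  have hl : ℓ ≤ 9 := by omega
  interval_cases k <;> interval_cases ℓ <;> simp_all <;>
    (have hn2 : (2:ℝ) ≤ (n:ℝ) := by exact_mod_cast hn) <;> linarith
end
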